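/- For any positive integer N and any matrices B_1,…,B_N ∈ ℝ^{d×r} and A_1,…,A_N ∈ ℝ^{r×d}, the squared Frobenius norm of the aggregation error satisfies ‖E‖_F² ≤ ( (1/(2N²)) ∑_{i,j=1}^N ‖B_i − B_j‖_F² ) · ( (1/(2N²)) ∑_{i,j=1}^N ‖A_i − A_j‖_F² ). -/

import Mathlib

open scoped BigOperators

/-- Frobenius norm of a real matrix. -/
noncomputable def frob {m n : Type*} [Fintype m] [Fintype n] (M : Matrix m n ℝ) : ℝ :=
  Real.sqrt (∑ i, ∑ j, (M i j) ^ 2)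

section Aux

attribute [local instance] Matrix.frobeniusSeminormedAddCommGroup
  Matrix.frobeniusNormedAddCommGroup Matrix.frobeniusIsBoundedSMul Matrix.frobeniusNormSMulClass Matrix.frobeniusNormedSpace

variable {m n : Type*} [Fintype m] [Fintype n]

lemma frob_eq_norm (M : Matrix m n ℝ) : frob M = ‖M‖ := by
  rw [Matrix.frobenius_norm_def, frob, Real.sqrt_eq_rpow]
  congr 1
  refine Finset.sum_congr rfl fun i _ => Finset.sum_congr rfl fun j _ => ?_
  rw [Real.norm_eq_abs, show (2:ℝ) = ((2:ℕ):ℝ) by norm_num, Real.rpow_natCast, sq_abs]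

lemma frob_nonneg (M : Matrix m n ℝ) : 0 ≤ frob M := Real.sqrt_nonneg _

lemma frob_sq (M : Matrix m n ℝ) : frob M ^ 2 = ∑ i, ∑ j, (M i j) ^ 2 :=
  Real.sq_sqrt (by positivity)

lemma frob_neg (M : Matrix m n ℝ) : frob (-M) = frob M := by
  simp [frob]

lemma frob_smul (c : ℝ) (M : Matrix m n ℝ) : frob (c • M) = |c| * frob M := by
  rw [frob_eq_norm, frob_eq_norm, norm_smul, Real.norm_eq_abs]

lemma frob_sum_le {ι : Type*} (s : Finset ι) (f : ι → Matrix m n ℝ) :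
    frob (∑ i ∈ s, f i) ≤ ∑ i ∈ s, frob (f i) := by
  rw [frob_eq_norm]
  refine (norm_sum_le s f).trans_eq ?_
  exact Finset.sum_congr rfl fun i _ => (frob_eq_norm (f i)).symm

lemma frob_mul_le {p : Type*} [Fintype p] (X : Matrix m n ℝ) (Y : Matrix n p ℝ) :
    frob (X * Y) ≤ frob X * frob Y := by
  rw [frob_eq_norm, frob_eq_norm, frob_eq_norm]
  exact Matrix.frobenius_norm_mul X Y

/-- Frobenius inner product. -/
noncomputable def ip (X Y : Matrix m n ℝ) : ℝ := ∑ i, ∑ j, X i j * Y i j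

lemma frob_sq_sub (X Y : Matrix m n ℝ) :
    frob (X - Y) ^ 2 = frob X ^ 2 - 2 * ip X Y + frob Y ^ 2 := by
  have h : ∀ i j, (X - Y) i j ^ 2
      = X i j ^ 2 - 2 * (X i j * Y i j) + Y i j ^ 2 := by
    intro i j
    simp only [Matrix.sub_apply]
    ring
  simp only [frob_sq, ip, h, Finset.sum_add_distrib, Finset.sum_sub_distrib, Finset.mul_sum]

lemma ip_sum_right {ι : Type*} (s : Finset ι) (X : Matrix m n ℝ) (Y : ι → Matrix m n ℝ) :
    ip X (∑ j ∈ s, Y j) = ∑ j ∈ s, ip X (Y j) := by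
  simp only [ip, Matrix.sum_apply, Finset.mul_sum]
  rw [show (∑ p, ∑ q, ∑ j ∈ s, X p q * Y j p q) = ∑ p, ∑ j ∈ s, ∑ q, X p q * Y j p q from
    Finset.sum_congr rfl fun p _ => Finset.sum_comm, Finset.sum_comm]

lemma centered_double_sum {N : ℕ} (x : Fin N → Matrix m n ℝ) (h0 : ∑ i, x i = 0) :
    ∑ i, ∑ j, frob (x i - x j) ^ 2 = 2 * (N : ℝ) * ∑ i, frob (x i) ^ 2 := by
  have hz : ∀ i, ip (x i) (∑ j, x j) = 0 := fun i => by rw [h0]; simp [ip]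
  calc ∑ i, ∑ j, frob (x i - x j) ^ 2
      = ∑ i, ∑ j, (frob (x i) ^ 2 - 2 * ip (x i) (x j) + frob (x j) ^ 2) :=
        Finset.sum_congr rfl fun i _ => Finset.sum_congr rfl fun j _ => frob_sq_sub _ _
    _ = ∑ i, ((N : ℝ) * frob (x i) ^ 2 - 2 * ip (x i) (∑ j, x j) + ∑ j, frob (x j) ^ 2) := by
        refine Finset.sum_congr rfl fun i _ => ?_
        rw [Finset.sum_add_distrib, Finset.sum_sub_distrib, ip_sum_right, ← Finset.mul_sum,
          Finset.sum_const, Finset.card_univ, Fintype.card_fin, nsmul_eq_mul]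
    _ = 2 * (N : ℝ) * ∑ i, frob (x i) ^ 2 := by
        simp only [hz, mul_zero, sub_zero]
        rw [Finset.sum_add_distrib, ← Finset.mul_sum, Finset.sum_const, Finset.card_univ,
          Fintype.card_fin, nsmul_eq_mul]
        ring

end Aux

/-- Cauchy–Schwarz-type bound on the squared Frobenius norm of the
aggregation error:
`‖E‖_F² ≤ ((1/(2N²)) ∑ᵢⱼ ‖Bᵢ−Bⱼ‖_F²) · ((1/(2N²)) ∑ᵢⱼ ‖Aᵢ−Aⱼ‖_F²)`. -/
theorem aggregation_error_sq_bound (N d r : ℕ) (hN : 0 < N)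
    (B : Fin N → Matrix (Fin d) (Fin r) ℝ) (A : Fin N → Matrix (Fin r) (Fin d) ℝ) :
    frob (((N : ℝ)⁻¹ • ∑ i, B i) * ((N : ℝ)⁻¹ • ∑ i, A i) - (N : ℝ)⁻¹ • ∑ i, B i * A i) ^ 2
      ≤ ((1 / (2 * (N : ℝ) ^ 2)) * ∑ i, ∑ j, frob (B i - B j) ^ 2)
        * ((1 / (2 * (N : ℝ) ^ 2)) * ∑ i, ∑ j, frob (A i - A j) ^ 2) := by
  have hN' : (N : ℝ) ≠ 0 := Nat.cast_ne_zero.2 hN.ne'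
  set β := (N : ℝ)⁻¹ • ∑ i, B i with hβ
  set α := (N : ℝ)⁻¹ • ∑ i, A i with hα
  set x : Fin N → Matrix (Fin d) (Fin r) ℝ := fun i => B i - β with hx
  set y : Fin N → Matrix (Fin r) (Fin d) ℝ := fun i => A i - α with hy
  -- Step A: algebraic identity
  have hxyi : ∀ i, x i * y i = B i * A i - B i * α - β * A i + β * α := by
    intro i
    simp only [hx, hy, Matrix.sub_mul, Matrix.mul_sub]
    abel
  have hsum : ∑ i, x i * y i
      = (∑ i, B i * A i) - (N : ℝ)⁻¹ • ((∑ i, B i) * (∑ i, A i)) := by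
    rw [Finset.sum_congr rfl fun i _ => hxyi i]
    simp only [Finset.sum_add_distrib, Finset.sum_sub_distrib, ← Matrix.sum_mul,
      ← Matrix.mul_sum, Finset.sum_const, Finset.card_univ, Fintype.card_fin]
    rw [hβ, hα]
    simp only [Matrix.smul_mul, Matrix.mul_smul, smul_smul]
    match_scalars
    all_goals field_simp
    all_goals norm_num
  have hE : β * α - (N : ℝ)⁻¹ • ∑ i, B i * A i = -((N : ℝ)⁻¹ • ∑ i, x i * y i) := by
    rw [hsum, hβ, hα]
    simp only [Matrix.smul_mul, Matrix.mul_smul, smul_smul, smul_sub]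
    match_scalars
    all_goals field_simp
  -- Step B: norm bound
  have hbound : frob (β * α - (N : ℝ)⁻¹ • ∑ i, B i * A i)
      ≤ (N : ℝ)⁻¹ * ∑ i, frob (x i) * frob (y i) := by
    rw [hE, frob_neg, frob_smul]
    rw [abs_of_nonneg (by positivity)]
    refine mul_le_mul_of_nonneg_left ?_ (by positivity)
    refine (frob_sum_le _ _).trans ?_
    exact Finset.sum_le_sum fun i _ => frob_mul_le _ _
  have hsq : frob (β * α - (N : ℝ)⁻¹ • ∑ i, B i * A i) ^ 2
      ≤ ((N : ℝ)⁻¹) ^ 2 * ((∑ i, frob (x i) ^ 2) * ∑ i, frob (y i) ^ 2) := by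
    have h1 : frob (β * α - (N : ℝ)⁻¹ • ∑ i, B i * A i) ^ 2
        ≤ ((N : ℝ)⁻¹ * ∑ i, frob (x i) * frob (y i)) ^ 2 :=
      pow_le_pow_left₀ (frob_nonneg _) hbound 2
    refine h1.trans ?_
    rw [mul_pow]
    exact mul_le_mul_of_nonneg_left
      (Finset.sum_mul_sq_le_sq_mul_sq _ _ _) (by positivity)
  -- Step C: variance identities
  have hx0 : ∑ i, x i = 0 := by
    simp only [hx, Finset.sum_sub_distrib, Finset.sum_const, Finset.card_univ,
      Fintype.card_fin, hβ]
    match_scalars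
    all_goals field_simp
    all_goals norm_num
  have hy0 : ∑ i, y i = 0 := by
    simp only [hy, Finset.sum_sub_distrib, Finset.sum_const, Finset.card_univ,
      Fintype.card_fin, hα]
    match_scalars
    all_goals field_simp
    all_goals norm_num
  have hBx : ∀ i j, B i - B j = x i - x j := fun i j => (sub_sub_sub_cancel_right _ _ _).symm
  have hAy : ∀ i j, A i - A j = y i - y j := fun i j => (sub_sub_sub_cancel_right _ _ _).symm
  have hCB : ∑ i, ∑ j, frob (B i - B j) ^ 2 = 2 * (N : ℝ) * ∑ i, frob (x i) ^ 2 := by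
    rw [show (∑ i, ∑ j, frob (B i - B j) ^ 2) = ∑ i, ∑ j, frob (x i - x j) ^ 2 from
      Finset.sum_congr rfl fun i _ => Finset.sum_congr rfl fun j _ => by rw [hBx]]
    exact centered_double_sum x hx0
  have hCA : ∑ i, ∑ j, frob (A i - A j) ^ 2 = 2 * (N : ℝ) * ∑ i, frob (y i) ^ 2 := by
    rw [show (∑ i, ∑ j, frob (A i - A j) ^ 2) = ∑ i, ∑ j, frob (y i - y j) ^ 2 from
      Finset.sum_congr rfl fun i _ => Finset.sum_congr rfl fun j _ => by rw [hAy]]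
    exact centered_double_sum y hy0
  rw [hCB, hCA]
  refine hsq.trans (le_of_eq ?_)
  field_simp
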